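/- Let G be a W-graph, A ⊆ ℤ a finite set, and φ a homomorphism from G to the W-linear graph on A. If (v_0,w_0,v_1)(v_1,w_1,v_2)⋯(v_{ℓ−1},w_{ℓ−1},v_0) is a cycle in G whose weights sum to 0, then φ(v_{i+1}) − φ(v_i) = w_i for every i ∈ [0,ℓ) (with the convention v_ℓ = v_0). -/

import Mathlib

open Filter


/-- A finite path: a list of consecutive edges, all belonging to `E`,
starting at `u` (when nonempty). -/
def FinPath {V : Type} (E : Set (V × ℤ × V)) (u : V) (p : List (V × ℤ × V)) : Prop :=
  (∀ e ∈ p, e ∈ E) ∧ List.Chain' (fun e e' => e.2.2 = e'.1) p ∧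
    ∀ h : p ≠ [], (p.head h).1 = u

/-- The last vertex of a finite path starting at `u` (which is `u` itself for the empty path). -/
def lastV {V : Type} (u : V) (p : List (V × ℤ × V)) : V :=
  (p.getLastD (u, 0, u)).2.2

/-- An infinite path: a sequence of consecutive edges, all belonging to `E`. -/
def InfPath {V : Type} (E : Set (V × ℤ × V)) (π : ℕ → V × ℤ × V) : Prop :=
  (∀ i, π i ∈ E) ∧ ∀ i, (π i).2.2 = (π (i + 1)).1

/-- The total weight of a finite path. -/
def pathWeight {V : Type} (p : List (V × ℤ × V)) : ℤ :=
  (p.map fun e => e.2.1).sum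

/-- A sequence of integer weights satisfies mean payoff if the liminf of the
averages of its prefixes is nonnegative. -/
def MeanPayoffSeq (w : ℕ → ℤ) : Prop :=
  0 ≤ Filter.atTop.liminf (fun ℓ : ℕ => (∑ i ∈ Finset.range ℓ, (w i : ℝ)) / (ℓ : ℝ))

/-- A graph (given by its edge set) satisfies mean payoff if all its infinite paths do. -/
def SatMP {V : Type} (E : Set (V × ℤ × V)) : Prop :=
  ∀ π : ℕ → V × ℤ × V, InfPath E π → MeanPayoffSeq (fun i => (π i).2.1)

/-- A cycle: a nonempty finite path whose first and last vertices coincide. -/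
def IsCycle {V : Type} (E : Set (V × ℤ × V)) (p : List (V × ℤ × V)) : Prop :=
  p ≠ [] ∧ ∃ v, FinPath E v p ∧ lastV v p = v

/-- A `W`-graph: a finite set of vertices, edges labelled by weights in `W`,
and an initial vertex from which every vertex is reachable. -/
structure WGraph (W : Finset ℤ) where
  V : Type
  fin : Fintype V
  E : Set (V × ℤ × V)
  init : V
  wt : ∀ e ∈ E, e.2.1 ∈ W
  reach : ∀ v : V, ∃ p, FinPath E init p ∧ lastV init p = v

attribute [instance] WGraph.fin

/-- The `W`-linear graph on a set `A ⊆ ℤ`: vertices are the elements of `A`, and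
for `v, v' ∈ A` and `w ∈ W` there is an edge `(v, w, v')` whenever `v' - v ≤ w`. -/
def LinE (W : Finset ℤ) (A : Set ℤ) : Set (ℤ × ℤ × ℤ) :=
  {e | e.1 ∈ A ∧ e.2.2 ∈ A ∧ e.2.1 ∈ W ∧ e.2.2 - e.1 ≤ e.2.1}

/-- A homomorphism of labelled graphs (no requirement on initial vertices). -/
def IsHom {V U : Type} (E : Set (V × ℤ × V)) (E' : Set (U × ℤ × U)) (φ : V → U) : Prop :=
  ∀ e ∈ E, (φ e.1, e.2.1, φ e.2.2) ∈ E'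

/-- A graph (given by its edge set) is `(n,W)`-universal if it satisfies mean payoff and
every `(n,W)`-graph satisfying mean payoff admits a homomorphism into it. -/
def Universal (n : ℕ) (W : Finset ℤ) {U : Type} (EU : Set (U × ℤ × U)) : Prop :=
  SatMP EU ∧
    ∀ G : WGraph W, Fintype.card G.V ≤ n → SatMP G.E → ∃ φ : G.V → U, IsHom G.E EU φ

/-- The set of weights `(-N, N)`: integers `w` with `-N < w < N`. -/
noncomputable def Wball (N : ℕ) : Finset ℤ := Finset.Ioo (-(N : ℤ)) (N : ℤ)

/-- `φ` is the distance function from the initial vertex: `φ v` is the minimum total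
weight of a finite path from the initial vertex to `v`. -/
def IsDistFrom {W : Finset ℤ} (G : WGraph W) (φ : G.V → ℤ) : Prop :=
  ∀ v : G.V,
    (∃ p, FinPath G.E G.init p ∧ lastV G.init p = v ∧ pathWeight p = φ v) ∧
    ∀ p, FinPath G.E G.init p → lastV G.init p = v → φ v ≤ pathWeight p

/-- if `φ` is a homomorphism from a `W`-graph `G` to the `W`-linear
graph on a finite set `A ⊆ ℤ`, then along any cycle of `G` of total weight `0` all
the inequalities defining the homomorphism are equalities:
`φ(v_{i+1}) - φ(v_i) = w_i` for every edge `(v_i, w_i, v_{i+1})` of the cycle. -/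
theorem hom_equality_on_zero_cycle {W : Finset ℤ} (G : WGraph W) (A : Set ℤ)
    (hA : A.Finite) (φ : G.V → ℤ) (hφ : IsHom G.E (LinE W A) φ)
    (v0 : G.V) (p : List (G.V × ℤ × G.V))
    (hp : FinPath G.E v0 p) (hne : p ≠ []) (hcycle : lastV v0 p = v0)
    (hzero : pathWeight p = 0) :
    ∀ (i : ℕ) (h : i < p.length),
      φ (p.get ⟨i, h⟩).2.2 - φ (p.get ⟨i, h⟩).1 = (p.get ⟨i, h⟩).2.1 := by
  classical
  set ℓ := p.length with hℓ
  have hℓpos : 0 < ℓ := List.length_pos_iff.mpr hne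
  set g : ℕ → ℤ := fun i => if h : i < ℓ then φ (p.get ⟨i, h⟩).1 else φ v0 with hg
  -- g at successor is φ of target
  have hgsucc : ∀ i (h : i < ℓ), φ (p.get ⟨i, h⟩).2.2 = g (i + 1) := by
    intro i h
    rcases lt_or_eq_of_le (Nat.succ_le_of_lt h) with h' | h'
    · have hc := List.isChain_iff_getElem.mp hp.2.1 i (by omega)
      simp only [hg, h', dif_pos]
      exact congrArg φ hc
    · have hlast : lastV v0 p = (p.get ⟨ℓ - 1, by omega⟩).2.2 := by
        unfold lastV
        rw [List.getLastD_eq_getLast?, List.getLast?_eq_getLast hne, Option.getD_some,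
          List.getLast_eq_getElem]
        rfl
      have hi : i = ℓ - 1 := by omega
      subst hi
      simp only [hg, show ¬ (ℓ - 1 + 1 < ℓ) by omega, dif_neg, not_false_iff]
      rw [← hcycle, hlast]
  have hg0 : g 0 = φ v0 := by
    simp only [hg, dif_pos hℓpos]
    rw [show p.get ⟨0, hℓpos⟩ = p.head hne from (List.head_eq_getElem_zero hne).symm, hp.2.2 hne]
  have hgℓ : g ℓ = φ v0 := by simp [hg]
  -- each term nonneg
  have hterm : ∀ i (h : i < ℓ), g (i + 1) - g i ≤ (p.get ⟨i, h⟩).2.1 := by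
    intro i h
    have he : p.get ⟨i, h⟩ ∈ G.E := hp.1 _ (p.get_mem _)
    have := hφ _ he
    rw [LinE] at this
    have hle : φ (p.get ⟨i, h⟩).2.2 - φ (p.get ⟨i, h⟩).1 ≤ (p.get ⟨i, h⟩).2.1 := this.2.2.2
    have h1 : g i = φ (p.get ⟨i, h⟩).1 := by simp only [hg, dif_pos h]
    rw [← hgsucc i h, h1]
    omega
  set F : ℕ → ℤ := fun i => if h : i < ℓ then (p.get ⟨i, h⟩).2.1 - (g (i + 1) - g i) else 0
    with hF
  have hFnonneg : ∀ i ∈ Finset.range ℓ, 0 ≤ F i := by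
    intro i hi
    rw [Finset.mem_range] at hi
    simp only [hF, dif_pos hi]
    have := hterm i hi
    omega
  have hsumw : ∑ i ∈ Finset.range ℓ, (fun j => if h : j < ℓ then (p.get ⟨j, h⟩).2.1 else 0) i
      = 0 := by
    rw [← Fin.sum_univ_eq_sum_range]
    have : ∀ i : Fin ℓ, (if h : (i : ℕ) < ℓ then (p.get ⟨i, h⟩).2.1 else 0)
        = (p.get ⟨i, i.2⟩).2.1 := fun i => dif_pos i.2
    rw [Finset.sum_congr rfl fun i _ => this i]
    rw [← hzero]
    unfold pathWeight
    rw [← Fin.sum_univ_fun_getElem p (fun e => e.2.1)]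
    rfl
  have hsumg : ∑ i ∈ Finset.range ℓ, (g (i + 1) - g i) = 0 := by
    rw [Finset.sum_range_sub g, hgℓ, hg0, sub_self]
  have hsumF : ∑ i ∈ Finset.range ℓ, F i = 0 := by
    have : ∀ i ∈ Finset.range ℓ, F i
        = (if h : i < ℓ then (p.get ⟨i, h⟩).2.1 else 0) - (g (i + 1) - g i) := by
      intro i hi
      rw [Finset.mem_range] at hi
      simp only [hF, dif_pos hi]
    rw [Finset.sum_congr rfl this, Finset.sum_sub_distrib, hsumw, hsumg, sub_self]
  have hFzero := (Finset.sum_eq_zero_iff_of_nonneg hFnonneg).mp hsumF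
  intro i h
  have := hFzero i (Finset.mem_range.mpr h)
  simp only [hF, dif_pos (show i < ℓ from h)] at this
  have h1 : g i = φ (p.get ⟨i, h⟩).1 := by simp only [hg, dif_pos (show i < ℓ from h)]
  rw [hgsucc i h, ← h1]
  omega
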